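/- Super-multiplicativity of the weighted-Schatten standard-deviation size: for ℓ > 0, integers 1 ≤ j ≤ k-1, and traceless matrices A_1,…,A_k ∈ ℂ^{N×N}, one has (∏_{α=1}^{j} |||A_α|||_{2j,ℓ}) · (∏_{α=j+1}^{k} |||A_α|||_{2(k-j),ℓ}) ≤ C^k ∏_{α=1}^{k} |||A_α|||_{2k,ℓ} for a universal constant C. -/

import Mathlib

open Matrix MeasureTheory Asymptotics
open scoped ComplexOrder BigOperators

/-- Normalized trace `⟨M⟩ = N⁻¹ Tr M`. -/
noncomputable def ntr {N : ℕ} (M : Matrix (Fin N) (Fin N) ℂ) : ℂ :=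
  (N : ℂ)⁻¹ * M.trace

/-- `|A| = (A Aᴴ)^{1/2}`. -/
noncomputable def matAbs {N : ℕ} (A : Matrix (Fin N) (Fin N) ℂ) : Matrix (Fin N) (Fin N) ℂ :=
  (Matrix.posSemidef_self_mul_conjTranspose A).1.eigenvectorUnitary.1 *
    Matrix.diagonal ((↑) ∘ (√·) ∘ (Matrix.posSemidef_self_mul_conjTranspose A).1.eigenvalues) *
    (star (Matrix.posSemidef_self_mul_conjTranspose A).1.eigenvectorUnitary : Matrix (Fin N) (Fin N) ℂ)

/-- Euclidean operator norm of a matrix. -/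
noncomputable def opNorm {N : ℕ} (A : Matrix (Fin N) (Fin N) ℂ) : ℝ :=
  ‖Matrix.toEuclideanCLM (𝕜 := ℂ) A‖

/-- Normalized `p`-th Schatten norm `⟨|A|^p⟩^{1/p}`. -/
noncomputable def schatten {N : ℕ} (p : ℕ) (A : Matrix (Fin N) (Fin N) ℂ) : ℝ :=
  (ntr (matAbs A ^ p)).re ^ ((p : ℝ)⁻¹)

/-- The `ℓ`-weighted `(2,p)`-Schatten norm, `p ∈ [2,∞]` (`p = ⊤` uses the operator norm). -/
noncomputable def wnorm {N : ℕ} (p : ℕ∞) (ℓ : ℝ) (A : Matrix (Fin N) (Fin N) ℂ) : ℝ :=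
  p.recTopCoe (schatten 2 A / ℓ ^ ((2:ℝ)⁻¹) + opNorm A)
    (fun q => schatten 2 A / ℓ ^ ((2:ℝ)⁻¹) + schatten q A / ℓ ^ ((q : ℝ)⁻¹))

/-- Resolvent `G(ζ) = (W - ζ)⁻¹`. -/
noncomputable def resOf {N : ℕ} (W : Matrix (Fin N) (Fin N) ℂ) (ζ : ℂ) :
    Matrix (Fin N) (Fin N) ℂ :=
  (W - ζ • (1 : Matrix (Fin N) (Fin N) ℂ))⁻¹

/-- `Im G = (G - Gᴴ)/(2i)`. -/
noncomputable def imPart {N : ℕ} (G : Matrix (Fin N) (Fin N) ℂ) : Matrix (Fin N) (Fin N) ℂ :=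
  (2 * Complex.I)⁻¹ • (G - Gᴴ)

/-- Bessel function of the first kind of order one (integral representation). -/
noncomputable def besselJ1 (x : ℝ) : ℝ :=
  (1 / Real.pi) * ∫ θ in (0:ℝ)..Real.pi, Real.cos (θ - x * Real.sin θ)

/-- Semicircle density on `[-2,2]`. -/
noncomputable def rhoSC (x : ℝ) : ℝ := (1 / (2 * Real.pi)) * Real.sqrt (4 - x ^ 2)

/-- Stieltjes transform of the semicircle law. -/
noncomputable def mSC (z : ℂ) : ℂ := ∫ x in (-2:ℝ)..2, (rhoSC x : ℂ) / (x - z)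

/-- `φ(t) = J₁(2t)/t`, with `φ(0) = 1`. -/
noncomputable def phiSC (t : ℝ) : ℝ := if t = 0 then 1 else besselJ1 (2 * t) / t

/-! ### Auxiliary lemmas -/

lemma conj_pow_aux {N : ℕ} (U D : Matrix (Fin N) (Fin N) ℂ)
    (h1 : star U * U = 1) (h2 : U * star U = 1) (p : ℕ) :
    (U * D * star U) ^ p = U * D ^ p * star U := by
  have key : ∀ X : Matrix (Fin N) (Fin N) ℂ, star U * (U * X) = X := fun X => by
    rw [← mul_assoc, h1, one_mul]
  induction p with
  | zero => simp [h2]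
  | succ n ih =>
    rw [pow_succ, ih, pow_succ]
    simp only [mul_assoc, key]

lemma trace_pow_eig {N : ℕ} (B : Matrix (Fin N) (Fin N) ℂ) (hB : B.IsHermitian) (p : ℕ) :
    (B ^ p).trace = ∑ i, ((hB.eigenvalues i : ℂ)) ^ p := by
  conv_lhs => rw [hB.spectral_theorem]
  rw [Unitary.conjStarAlgAut_apply, conj_pow_aux _ _ (by simp) (by simp) p,
    Matrix.diagonal_pow, Matrix.trace_mul_cycle, Matrix.UnitaryGroup.star_mul_self, one_mul,
    Matrix.trace_diagonal]
  simp [Pi.pow_apply]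

noncomputable def matAbsPSD {N : ℕ} (A : Matrix (Fin N) (Fin N) ℂ) : (matAbs A).PosSemidef :=
  (Matrix.PosSemidef.diagonal (by intro i; simp [Complex.zero_le_real, Real.sqrt_nonneg])).mul_mul_conjTranspose_same _

noncomputable def eig {N : ℕ} (A : Matrix (Fin N) (Fin N) ℂ) : Fin N → ℝ :=
  (matAbsPSD A).1.eigenvalues

lemma eig_nonneg {N : ℕ} (A : Matrix (Fin N) (Fin N) ℂ) (i : Fin N) : 0 ≤ eig A i :=
  (matAbsPSD A).eigenvalues_nonneg i

lemma schatten_eq {N : ℕ} (p : ℕ) (A : Matrix (Fin N) (Fin N) ℂ) :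
    schatten p A = ((N : ℝ)⁻¹ * ∑ i, eig A i ^ p) ^ ((p : ℝ)⁻¹) := by
  have h2 : (matAbs A ^ p).trace = ((∑ i, eig A i ^ p : ℝ) : ℂ) := by
    rw [trace_pow_eig (matAbs A) (matAbsPSD A).1 p]; push_cast; rfl
  unfold schatten ntr
  rw [h2]
  congr 1
  rw [show ((N:ℂ))⁻¹ * ((∑ i, eig A i ^ p : ℝ) : ℂ)
      = (((N:ℝ)⁻¹ * ∑ i, eig A i ^ p : ℝ) : ℂ) by push_cast; ring]
  exact Complex.ofReal_re _

lemma schatten_nonneg {N : ℕ} (p : ℕ) (A : Matrix (Fin N) (Fin N) ℂ) : 0 ≤ schatten p A := by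
  rw [schatten_eq]
  exact Real.rpow_nonneg (mul_nonneg (by positivity)
    (Finset.sum_nonneg fun i _ => pow_nonneg (eig_nonneg A i) _)) _

lemma wnorm_coe {N : ℕ} (q : ℕ) (ℓ : ℝ) (A : Matrix (Fin N) (Fin N) ℂ) :
    wnorm (q : ℕ∞) ℓ A = schatten 2 A / ℓ ^ ((2:ℝ)⁻¹) + schatten q A / ℓ ^ ((q : ℝ)⁻¹) := by
  simp [wnorm]

lemma wnorm_coe_nonneg {N : ℕ} (q : ℕ) {ℓ : ℝ} (hℓ : 0 < ℓ) (A : Matrix (Fin N) (Fin N) ℂ) :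
    0 ≤ wnorm (q : ℕ∞) ℓ A := by
  rw [wnorm_coe]
  have h1 := schatten_nonneg 2 A
  have h2 := schatten_nonneg q A
  have p1 : (0:ℝ) ≤ ℓ ^ ((2:ℝ)⁻¹) := Real.rpow_nonneg hℓ.le _
  have p2 : (0:ℝ) ≤ ℓ ^ ((q:ℝ)⁻¹) := Real.rpow_nonneg hℓ.le _
  positivity

set_option maxHeartbeats 1000000 in
lemma core_interp {n : ℕ} (lam : Fin n → ℝ) (hlam : ∀ i, 0 ≤ lam i) {c : ℝ} (hc : 0 ≤ c)
    {m k : ℕ} (hm : 2 ≤ m) (hmk : m < k) {ℓ : ℝ} (hℓ : 0 < ℓ) :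
    (c * ∑ i, lam i ^ (2*m)) ^ (((2*m : ℕ) : ℝ))⁻¹ / ℓ ^ (((2*m : ℕ):ℝ))⁻¹
      ≤ (c * ∑ i, lam i ^ 2) ^ ((2:ℝ))⁻¹ / ℓ ^ ((2:ℝ))⁻¹
        + (c * ∑ i, lam i ^ (2*k)) ^ (((2*k : ℕ):ℝ))⁻¹ / ℓ ^ (((2*k : ℕ):ℝ))⁻¹ := by
  have hmr : (2:ℝ) ≤ (m:ℝ) := by exact_mod_cast hm
  have hkr : (m:ℝ) + 1 ≤ (k:ℝ) := by exact_mod_cast hmk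
  set mr := (m:ℝ); set kr := (k:ℝ)
  have hm1 : (0:ℝ) < mr - 1 := by linarith
  have hk1 : (0:ℝ) < kr - 1 := by linarith
  have hkm : (0:ℝ) < kr - mr := by linarith
  set a : ℝ := (kr - mr)/(kr - 1) with ha_def
  set b : ℝ := (mr - 1)/(kr - 1) with hb_def
  set θ : ℝ := a / mr with hθ_def
  have hab : a + b = 1 := by
    rw [ha_def, hb_def, ← add_div, div_eq_one_iff_eq (by linarith)]; ring
  have ha0 : 0 < a := by positivity
  have hb0 : 0 < b := by positivity
  have hθ0 : 0 < θ := by positivity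
  have hθ1 : θ ≤ 1 := by
    rw [hθ_def, ha_def, div_le_one (by linarith), div_le_iff₀ hk1]; nlinarith
  set S2 : ℝ := c * ∑ i, lam i ^ 2 with hS2
  set Sm : ℝ := c * ∑ i, lam i ^ (2*m) with hSm
  set Sk : ℝ := c * ∑ i, lam i ^ (2*k) with hSk
  have hsum_nn : ∀ r : ℕ, 0 ≤ c * ∑ i, lam i ^ r := fun r =>
    mul_nonneg hc (Finset.sum_nonneg fun i _ => pow_nonneg (hlam i) _)
  have hS2_0 : 0 ≤ S2 := hsum_nn 2
  have hSm_0 : 0 ≤ Sm := hsum_nn _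
  have hSk_0 : 0 ≤ Sk := hsum_nn _
  -- Hölder step
  have h1 : Sm ≤ S2 ^ a * Sk ^ b := by
    set P : ℝ := (kr - 1)/(mr - 1) with hP_def
    have hP : 1 ≤ P := by rw [hP_def, le_div_iff₀ hm1]; linarith
    have hH := Real.inner_le_weight_mul_Lp_of_nonneg Finset.univ hP
      (fun i => c * lam i ^ 2) (fun i => lam i ^ (2*(m-1)))
      (fun i => mul_nonneg hc (sq_nonneg _)) (fun i => pow_nonneg (hlam i) _)
    have hwf : ∀ i : Fin n, c * lam i ^ 2 * lam i ^ (2*(m-1)) = c * lam i ^ (2*m) := by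
      intro i; rw [mul_assoc, ← pow_add]; congr 2; omega
    have hfP : ∀ i : Fin n, (lam i ^ (2*(m-1))) ^ P = lam i ^ (2*(k-1)) := by
      intro i
      rw [← Real.rpow_natCast (lam i) (2*(m-1)), ← Real.rpow_mul (hlam i),
        ← Real.rpow_natCast (lam i) (2*(k-1))]
      congr 1
      rw [hP_def]
      push_cast [Nat.cast_sub (by omega : 1 ≤ m), Nat.cast_sub (by omega : 1 ≤ k)]
      field_simp; ring
    have hwfP : ∀ i : Fin n, c * lam i ^ 2 * (lam i ^ (2*(m-1))) ^ P = c * lam i ^ (2*k) := by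
      intro i; rw [hfP i, mul_assoc, ← pow_add]; congr 2; omega
    simp only [hwf, hwfP] at hH
    rw [← Finset.mul_sum, ← Finset.mul_sum, ← Finset.mul_sum] at hH
    have h1P : 1 - P⁻¹ = a := by
      rw [hP_def, ha_def, inv_div]
      field_simp; ring
    have hiP : P⁻¹ = b := by rw [hP_def, hb_def, inv_div]
    rwa [h1P, hiP, ← hS2, ← hSm, ← hSk] at hH
  -- exponent bookkeeping
  push_cast
  set em : ℝ := (2*mr)⁻¹ with hem
  set ek : ℝ := (2*kr)⁻¹ with hek
  have hne1 : kr - 1 ≠ 0 := by linarith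
  have hne2 : mr ≠ 0 := by linarith
  have hne3 : kr ≠ 0 := by linarith
  have hae : a * em = θ * (2:ℝ)⁻¹ := by
    rw [hθ_def, hem, mul_inv, div_eq_mul_inv]; ring
  have hbe : b * em = (1-θ) * ek := by
    rw [hθ_def, hem, hek, ha_def, hb_def]; field_simp; ring
  have he1 : θ * (2:ℝ)⁻¹ + (1-θ) * ek = em := by rw [← hae, ← hbe]; nlinarith [hab]
  have hem0 : (0:ℝ) ≤ em := by rw [hem]; positivity
  set X : ℝ := S2 ^ ((2:ℝ))⁻¹ / ℓ ^ ((2:ℝ))⁻¹ with hX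
  set Y : ℝ := Sk ^ ek / ℓ ^ ek with hY
  have hX0 : 0 ≤ X := div_nonneg (Real.rpow_nonneg hS2_0 _) (Real.rpow_nonneg hℓ.le _)
  have hY0 : 0 ≤ Y := div_nonneg (Real.rpow_nonneg hSk_0 _) (Real.rpow_nonneg hℓ.le _)
  have step2 : Sm ^ em / ℓ ^ em ≤ X ^ θ * Y ^ (1-θ) := by
    have hnum : Sm ^ em ≤ S2 ^ (θ * (2:ℝ)⁻¹) * Sk ^ ((1-θ) * ek) := by
      calc Sm ^ em ≤ (S2 ^ a * Sk ^ b) ^ em :=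
            Real.rpow_le_rpow hSm_0 h1 hem0
        _ = S2 ^ (θ * (2:ℝ)⁻¹) * Sk ^ ((1-θ) * ek) := by
            rw [Real.mul_rpow (Real.rpow_nonneg hS2_0 _) (Real.rpow_nonneg hSk_0 _),
              ← Real.rpow_mul hS2_0, ← Real.rpow_mul hSk_0, hae, hbe]
    have hre : X ^ θ * Y ^ (1-θ) = (S2 ^ (θ * (2:ℝ)⁻¹) * Sk ^ ((1-θ) * ek)) / ℓ ^ em := by
      rw [hX, hY, Real.div_rpow (Real.rpow_nonneg hS2_0 _) (Real.rpow_nonneg hℓ.le _),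
        Real.div_rpow (Real.rpow_nonneg hSk_0 _) (Real.rpow_nonneg hℓ.le _), div_mul_div_comm,
        ← Real.rpow_mul hS2_0, ← Real.rpow_mul hSk_0,
        ← Real.rpow_mul hℓ.le, ← Real.rpow_mul hℓ.le,
        ← Real.rpow_add hℓ]
      rw [show (2:ℝ)⁻¹ * θ = θ * (2:ℝ)⁻¹ by ring, show ek * (1-θ) = (1-θ) * ek by ring, he1]
    rw [hre]
    have hden : (0:ℝ) < ℓ ^ em := Real.rpow_pos_of_pos hℓ _
    exact div_le_div_of_nonneg_right hnum hden.le |>.trans_eq rfl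
  calc Sm ^ em / ℓ ^ em ≤ X ^ θ * Y ^ (1-θ) := step2
    _ ≤ θ * X + (1-θ) * Y :=
        Real.geom_mean_le_arith_mean2_weighted hθ0.le (by linarith) hX0 hY0 (by ring)
    _ ≤ X + Y := by nlinarith [mul_nonneg (sub_nonneg.2 hθ1) hX0, mul_nonneg hθ0.le hY0]

lemma wnorm_mono {N : ℕ} {m k : ℕ} (hm : 1 ≤ m) (hmk : m ≤ k) {ℓ : ℝ} (hℓ : 0 < ℓ)
    (A : Matrix (Fin N) (Fin N) ℂ) :
    wnorm ((2*m : ℕ) : ℕ∞) ℓ A ≤ 2 * wnorm ((2*k : ℕ) : ℕ∞) ℓ A := by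
  rcases eq_or_lt_of_le hmk with rfl | hlt
  · have h := wnorm_coe_nonneg (2*m) hℓ A
    linarith
  have hY : (0:ℝ) ≤ schatten (2*k) A / ℓ ^ (((2*k : ℕ):ℝ))⁻¹ :=
    div_nonneg (schatten_nonneg _ A) (Real.rpow_nonneg hℓ.le _)
  have hX : (0:ℝ) ≤ schatten 2 A / ℓ ^ ((2:ℝ)⁻¹) :=
    div_nonneg (schatten_nonneg _ A) (Real.rpow_nonneg hℓ.le _)
  rcases eq_or_lt_of_le hm with rfl | hm2
  · -- m = 1
    rw [wnorm_coe, wnorm_coe]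
    have h21 : ((2*1 : ℕ) : ℝ)⁻¹ = (2:ℝ)⁻¹ := by norm_num
    have h2s : schatten (2*1) A = schatten 2 A := by norm_num
    rw [h21, h2s]
    linarith
  · -- 2 ≤ m < k
    rw [wnorm_coe, wnorm_coe, schatten_eq (2*m) A, schatten_eq (2*k) A, schatten_eq 2 A]
    simp only [Nat.cast_ofNat]
    have hkey := core_interp (eig A) (eig_nonneg A) (c := (N:ℝ)⁻¹) (by positivity) hm2 hlt hℓ
    have hnn : ∀ r : ℕ, (0:ℝ) ≤ (N:ℝ)⁻¹ * ∑ i, eig A i ^ r := fun r =>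
      mul_nonneg (by positivity) (Finset.sum_nonneg fun i _ => pow_nonneg (eig_nonneg A i) _)
    have hX' : (0:ℝ) ≤ ((N:ℝ)⁻¹ * ∑ i, eig A i ^ 2) ^ ((2:ℝ))⁻¹ / ℓ ^ ((2:ℝ)⁻¹) :=
      div_nonneg (Real.rpow_nonneg (hnn 2) _) (Real.rpow_nonneg hℓ.le _)
    have hY' : (0:ℝ) ≤ ((N:ℝ)⁻¹ * ∑ i, eig A i ^ (2*k)) ^ (((2*k:ℕ):ℝ))⁻¹ / ℓ ^ (((2*k:ℕ):ℝ)⁻¹) :=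
      div_nonneg (Real.rpow_nonneg (hnn _) _) (Real.rpow_nonneg hℓ.le _)
    linarith [hkey]

/-- super-multiplicativity of the standard-deviation size:
`s_j(ℓ; A_1..A_j) · s_{k-j}(ℓ; A_{j+1}..A_k) ≤ C^k s_k(ℓ; A_1..A_k)`. -/
theorem s_supermultiplicative :
    ∃ C : ℝ, 0 < C ∧ ∀ (N k j : ℕ) (ℓ : ℝ) (A : ℕ → Matrix (Fin N) (Fin N) ℂ),
      0 < ℓ → 1 ≤ j → j < k → (∀ i < k, (A i).trace = 0) →
      (∏ i ∈ Finset.range j, wnorm ((2 * j : ℕ) : ℕ∞) ℓ (A i)) *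
        (∏ i ∈ Finset.Ico j k, wnorm ((2 * (k - j) : ℕ) : ℕ∞) ℓ (A i))
      ≤ C ^ k * ∏ i ∈ Finset.range k, wnorm ((2 * k : ℕ) : ℕ∞) ℓ (A i) := by
  refine ⟨2, two_pos, fun N k j ℓ A hℓ hj hjk _ => ?_⟩
  have hW : ∀ i, 0 ≤ wnorm ((2 * k : ℕ) : ℕ∞) ℓ (A i) := fun i => wnorm_coe_nonneg _ hℓ _
  have h1 : (∏ i ∈ Finset.range j, wnorm ((2 * j : ℕ) : ℕ∞) ℓ (A i))
      ≤ ∏ i ∈ Finset.range j, (2 * wnorm ((2 * k : ℕ) : ℕ∞) ℓ (A i)) :=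
    Finset.prod_le_prod (fun i _ => wnorm_coe_nonneg _ hℓ _)
      (fun i _ => wnorm_mono hj hjk.le hℓ (A i))
  have h2 : (∏ i ∈ Finset.Ico j k, wnorm ((2 * (k - j) : ℕ) : ℕ∞) ℓ (A i))
      ≤ ∏ i ∈ Finset.Ico j k, (2 * wnorm ((2 * k : ℕ) : ℕ∞) ℓ (A i)) :=
    Finset.prod_le_prod (fun i _ => wnorm_coe_nonneg _ hℓ _)
      (fun i _ => wnorm_mono (by omega) (by omega) hℓ (A i))
  have e1 : ∏ i ∈ Finset.range j, (2 * wnorm ((2 * k : ℕ) : ℕ∞) ℓ (A i))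
      = 2 ^ j * ∏ i ∈ Finset.range j, wnorm ((2 * k : ℕ) : ℕ∞) ℓ (A i) := by
    rw [Finset.prod_mul_distrib, Finset.prod_const, Finset.card_range]
  have e2 : ∏ i ∈ Finset.Ico j k, (2 * wnorm ((2 * k : ℕ) : ℕ∞) ℓ (A i))
      = 2 ^ (k - j) * ∏ i ∈ Finset.Ico j k, wnorm ((2 * k : ℕ) : ℕ∞) ℓ (A i) := by
    rw [Finset.prod_mul_distrib, Finset.prod_const, Nat.card_Ico]
  calc (∏ i ∈ Finset.range j, wnorm ((2 * j : ℕ) : ℕ∞) ℓ (A i)) *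
        (∏ i ∈ Finset.Ico j k, wnorm ((2 * (k - j) : ℕ) : ℕ∞) ℓ (A i))
      ≤ (∏ i ∈ Finset.range j, (2 * wnorm ((2 * k : ℕ) : ℕ∞) ℓ (A i))) *
        (∏ i ∈ Finset.Ico j k, (2 * wnorm ((2 * k : ℕ) : ℕ∞) ℓ (A i))) := by
        apply mul_le_mul h1 h2
          (Finset.prod_nonneg fun i _ => wnorm_coe_nonneg _ hℓ _)
          (Finset.prod_nonneg fun i _ => mul_nonneg (by norm_num) (hW i))
    _ = 2 ^ k * ∏ i ∈ Finset.range k, wnorm ((2 * k : ℕ) : ℕ∞) ℓ (A i) := by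
        rw [e1, e2]
        rw [show (2:ℝ)^j * _ * ((2:ℝ)^(k-j) * _) = ((2:ℝ)^j * 2^(k-j)) *
          ((∏ i ∈ Finset.range j, wnorm ((2 * k : ℕ) : ℕ∞) ℓ (A i)) *
           ∏ i ∈ Finset.Ico j k, wnorm ((2 * k : ℕ) : ℕ∞) ℓ (A i)) from by ring]
        rw [← pow_add, Finset.prod_range_mul_prod_Ico _ hjk.le]
        congr 2
        omega
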